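/- Let n, n' and m be nonnegative integers such that n+m is odd and n'+m is even. Then the partisan chocolate game position PC(n,m) is greater than or equal to PC(n',m) in the normal-play game order. -/

import Mathlib

universe u

namespace SetTheory

/-- Pre-games (removed from Mathlib; restored with the old Mathlib definition). -/
inductive PGame : Type (u + 1)
  | mk : ∀ α β : Type u, (α → PGame) → (β → PGame) → PGame

namespace PGame

/-- The pair (`x ≤ y`, `x ⧏ y`), defined by simultaneous recursion as in old Mathlib. -/
noncomputable def leLf : PGame.{u} → PGame.{u} → Prop × Prop
  | mk xl xr xL xR => fun y =>
    @PGame.rec (fun _ => Prop × Prop)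
      (fun yl yr yL yR IHyL IHyR =>
        ((∀ i, (leLf (xL i) (mk yl yr yL yR)).2) ∧ ∀ j, (IHyR j).2,
          (∃ i, (IHyL i).1) ∨ ∃ j, (leLf (xR j) (mk yl yr yL yR)).1)) y

/-- The normal-play order on pre-games. -/
noncomputable instance : LE PGame.{u} :=
  ⟨fun x y => (leLf x y).1⟩

end PGame

end SetTheory

open SetTheory

/-- The partisan chocolate game position `PC n m`.
Left options: `PC n' m` with `n' < n` and `n' + m` even, and `PC n m'` with `m' < m` and
`n + m'` even. Right options: the same with "odd" in place of "even". -/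
def PC : ℕ → ℕ → SetTheory.PGame
  | n, m =>
    SetTheory.PGame.mk
      {p : ℕ × ℕ // (p.2 = m ∧ p.1 < n ∧ Even (p.1 + m)) ∨ (p.1 = n ∧ p.2 < m ∧ Even (n + p.2))}
      {p : ℕ × ℕ // (p.2 = m ∧ p.1 < n ∧ Odd (p.1 + m)) ∨ (p.1 = n ∧ p.2 < m ∧ Odd (n + p.2))}
      (fun p => PC p.1.1 p.1.2)
      (fun p => PC p.1.1 p.1.2)
termination_by n m => n + m
decreasing_by
  all_goals rcases p.2 with ⟨h1, h2, -⟩ | ⟨h1, h2, -⟩ <;> omega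

namespace SetTheory

namespace PGame

/-- The less-or-fuzzy relation. -/
def LF (x y : PGame.{u}) : Prop := (leLf x y).2

infix:50 " ⧏ " => SetTheory.PGame.LF

theorem leLf_mk (xl xr : Type u) (xL : xl → PGame.{u}) (xR : xr → PGame.{u})
    (yl yr : Type u) (yL : yl → PGame.{u}) (yR : yr → PGame.{u}) :
    leLf (mk xl xr xL xR) (mk yl yr yL yR) =
      ((∀ i, (leLf (xL i) (mk yl yr yL yR)).2) ∧ ∀ j, (leLf (mk xl xr xL xR) (yR j)).2,
        (∃ i, (leLf (mk xl xr xL xR) (yL i)).1) ∨ ∃ j, (leLf (xR j) (mk yl yr yL yR)).1) := by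
  rfl

theorem le_iff_forall_lf {xl xr : Type u} {xL : xl → PGame.{u}} {xR : xr → PGame.{u}}
    {yl yr : Type u} {yL : yl → PGame.{u}} {yR : yr → PGame.{u}} :
    mk xl xr xL xR ≤ mk yl yr yL yR ↔
      (∀ i, xL i ⧏ mk yl yr yL yR) ∧ ∀ j, mk xl xr xL xR ⧏ yR j := by
  show (leLf _ _).1 ↔ _
  rw [leLf_mk]
  exact Iff.rfl

theorem lf_of_le_moveLeft {x : PGame.{u}} {yl yr : Type u} {yL : yl → PGame.{u}}
    {yR : yr → PGame.{u}} {i : yl} (h : x ≤ yL i) : x ⧏ mk yl yr yL yR := by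
  cases x with
  | mk xl xr xL xR =>
    show (leLf _ _).2
    rw [leLf_mk]
    exact Or.inl ⟨i, h⟩

theorem lf_of_moveRight_le {xl xr : Type u} {xL : xl → PGame.{u}} {xR : xr → PGame.{u}}
    {y : PGame.{u}} {j : xr} (h : xR j ≤ y) : mk xl xr xL xR ⧏ y := by
  cases y with
  | mk yl yr yL yR =>
    show (leLf _ _).2
    rw [leLf_mk]
    exact Or.inr ⟨j, h⟩

end PGame

end SetTheory

/-- Left-option predicate. -/
def LP (n m : ℕ) (p : ℕ × ℕ) : Prop :=
  (p.2 = m ∧ p.1 < n ∧ Even (p.1 + m)) ∨ (p.1 = n ∧ p.2 < m ∧ Even (n + p.2))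

/-- Right-option predicate. -/
def RP (n m : ℕ) (p : ℕ × ℕ) : Prop :=
  (p.2 = m ∧ p.1 < n ∧ Odd (p.1 + m)) ∨ (p.1 = n ∧ p.2 < m ∧ Odd (n + p.2))

theorem PC_eq (n m : ℕ) : PC n m =
    SetTheory.PGame.mk {p : ℕ × ℕ // LP n m p} {p : ℕ × ℕ // RP n m p}
      (fun p => PC p.1.1 p.1.2) (fun p => PC p.1.1 p.1.2) := by
  rw [PC]; rfl

theorem PC_le {n m n' m' : ℕ}
    (h1 : ∀ p : ℕ × ℕ, LP n m p → PC p.1 p.2 ⧏ PC n' m')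
    (h2 : ∀ p : ℕ × ℕ, RP n' m' p → PC n m ⧏ PC p.1 p.2) : PC n m ≤ PC n' m' := by
  rw [PC_eq n m, PC_eq n' m', PGame.le_iff_forall_lf]
  constructor
  · rintro ⟨p, hp⟩
    have := h1 p hp
    rw [PC_eq n' m'] at this
    exact this
  · rintro ⟨p, hp⟩
    have := h2 p hp
    rw [PC_eq n m] at this
    exact this

theorem PC_lf_of_left {a b c d : ℕ} (q : ℕ × ℕ) (hq : LP c d q)
    (h : PC a b ≤ PC q.1 q.2) : PC a b ⧏ PC c d := by
  rw [PC_eq c d]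
  exact PGame.lf_of_le_moveLeft (i := ⟨q, hq⟩) h

theorem PC_lf_of_right {a b c d : ℕ} (q : ℕ × ℕ) (hq : RP a b q)
    (h : PC q.1 q.2 ≤ PC c d) : PC a b ⧏ PC c d := by
  rw [PC_eq a b]
  exact PGame.lf_of_moveRight_le (j := ⟨q, hq⟩) h

/-- weight of a position -/
def w (n m : ℕ) : ℕ := if n % 2 = 1 ∧ m % 2 = 1 then n + m - 2 else n + m

theorem w_le (n m : ℕ) : w n m ≤ n + m := by unfold w; split <;> omega

theorem w_mod (n m : ℕ) : w n m % 2 = (n + m) % 2 := by unfold w; split <;> omega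

theorem LP_facts {n m : ℕ} (p : ℕ × ℕ) (hp : LP n m p) :
    Even (p.1 + p.2) ∧ p.1 + p.2 < n + m := by
  obtain ⟨a, b⟩ := p
  rcases hp with ⟨h1, h2, h3⟩ | ⟨h1, h2, h3⟩ <;> dsimp at * <;> subst h1
  · exact ⟨h3, by omega⟩
  · exact ⟨h3, by omega⟩

theorem RP_facts {n m : ℕ} (p : ℕ × ℕ) (hp : RP n m p) :
    Odd (p.1 + p.2) ∧ p.1 + p.2 < n + m := by
  obtain ⟨a, b⟩ := p
  rcases hp with ⟨h1, h2, h3⟩ | ⟨h1, h2, h3⟩ <;> dsimp at * <;> subst h1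
  · exact ⟨h3, by omega⟩
  · exact ⟨h3, by omega⟩

theorem LP_w {n m : ℕ} {p : ℕ × ℕ} (h : Even (n + m)) (hp : LP n m p) :
    w p.1 p.2 + 2 ≤ w n m := by
  rw [Nat.even_iff] at h
  obtain ⟨a, b⟩ := p
  rcases hp with ⟨h1, h2, h3⟩ | ⟨h1, h2, h3⟩ <;> dsimp at * <;> subst h1 <;>
    rw [Nat.even_iff] at h3 <;> unfold w <;> split_ifs <;> omega

theorem exL_odd (n m : ℕ) (h : Odd (n + m)) :
    ∃ p : ℕ × ℕ, LP n m p ∧ Even (p.1 + p.2) ∧ p.1 + p.2 = n + m - 1 ∧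
      w p.1 p.2 = n + m - 1 := by
  rw [Nat.odd_iff] at h
  by_cases hn : n % 2 = 1
  · exact ⟨(n - 1, m), Or.inl ⟨rfl, by omega, Nat.even_iff.mpr (by omega)⟩,
      Nat.even_iff.mpr (by omega), by omega, by unfold w; split <;> omega⟩
  · exact ⟨(n, m - 1), Or.inr ⟨rfl, by omega, Nat.even_iff.mpr (by omega)⟩,
      Nat.even_iff.mpr (by omega), by omega, by unfold w; split <;> omega⟩

theorem exL_even (n m : ℕ) (h : Even (n + m)) (h2 : 2 ≤ w n m) :
    ∃ p : ℕ × ℕ, LP n m p ∧ Even (p.1 + p.2) ∧ p.1 + p.2 < n + m ∧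
      w p.1 p.2 + 2 = w n m := by
  rw [Nat.even_iff] at h
  unfold w at h2 ⊢
  by_cases hn : 2 ≤ n
  · refine ⟨(n - 2, m), Or.inl ⟨rfl, by omega, Nat.even_iff.mpr (by omega)⟩,
      Nat.even_iff.mpr (by omega), by omega, ?_⟩
    dsimp only
    split_ifs at h2 ⊢ <;> omega
  · have hm : 2 ≤ m := by split_ifs at h2 <;> omega
    refine ⟨(n, m - 2), Or.inr ⟨rfl, by omega, Nat.even_iff.mpr (by omega)⟩,
      Nat.even_iff.mpr (by omega), by omega, ?_⟩
    dsimp only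
    split_ifs at h2 ⊢ <;> omega

theorem exR_even (n m : ℕ) (h : Even (n + m)) (h1 : 1 ≤ n + m) :
    ∃ p : ℕ × ℕ, RP n m p ∧ Odd (p.1 + p.2) ∧ p.1 + p.2 = n + m - 1 := by
  rw [Nat.even_iff] at h
  by_cases hn : 1 ≤ n
  · exact ⟨(n - 1, m), Or.inl ⟨rfl, by omega, Nat.odd_iff.mpr (by omega)⟩,
      Nat.odd_iff.mpr (by omega), by omega⟩
  · exact ⟨(n, m - 1), Or.inr ⟨rfl, by omega, Nat.odd_iff.mpr (by omega)⟩,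
      Nat.odd_iff.mpr (by omega), by omega⟩

theorem exR_odd (n m : ℕ) (h : Odd (n + m)) (h3 : 3 ≤ n + m) :
    ∃ p : ℕ × ℕ, RP n m p ∧ Odd (p.1 + p.2) ∧ p.1 + p.2 = n + m - 2 := by
  rw [Nat.odd_iff] at h
  by_cases hn : 2 ≤ n
  · exact ⟨(n - 2, m), Or.inl ⟨rfl, by omega, Nat.odd_iff.mpr (by omega)⟩,
      Nat.odd_iff.mpr (by omega), by omega⟩
  · exact ⟨(n, m - 2), Or.inr ⟨rfl, by omega, Nat.odd_iff.mpr (by omega)⟩,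
      Nat.odd_iff.mpr (by omega), by omega⟩

theorem key : ∀ (k n m n' m' : ℕ), n + m + (n' + m') < k →
    (Even (n + m) ∧ Odd (n' + m') ∨
     Even (n + m) ∧ Even (n' + m') ∧ w n m ≤ w n' m' ∨
     Odd (n + m) ∧ Odd (n' + m') ∧ n' + m' ≤ n + m) →
    PC n m ≤ PC n' m' := by
  intro k
  induction k with
  | zero => intro n m n' m' hk; omega
  | succ k IH =>
    intro n m n' m' hk hcond
    apply PC_le
    · -- left options of PC n m
      intro p hp
      obtain ⟨hpe, hps⟩ := LP_facts p hp
      have hwp := w_le p.1 p.2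
      have hpe1 := Nat.even_iff.mp hpe
      rcases hcond with ⟨he, ho'⟩ | ⟨he, he', hw⟩ | ⟨ho, ho', hs⟩
      · -- S1(a)
        have ho1 := Nat.odd_iff.mp ho'
        by_cases hc : n' + m' < p.1 + p.2
        · obtain ⟨q, hq, hqo, hqs⟩ := exR_even p.1 p.2 hpe (by omega)
          exact PC_lf_of_right q hq (IH _ _ _ _ (by omega)
            (Or.inr (Or.inr ⟨hqo, ho', by omega⟩)))
        · obtain ⟨q, hq, hqe, hqs, hqw⟩ := exL_odd n' m' ho'
          exact PC_lf_of_left q hq (IH _ _ _ _ (by omega)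
            (Or.inr (Or.inl ⟨hpe, hqe, by omega⟩)))
      · -- S2(a)
        have hw2 := LP_w he hp
        obtain ⟨q, hq, hqe, hqs, hqw⟩ := exL_even n' m' he' (by omega)
        exact PC_lf_of_left q hq (IH _ _ _ _ (by omega)
          (Or.inr (Or.inl ⟨hpe, hqe, by omega⟩)))
      · -- S3(a)
        have ho1 := Nat.odd_iff.mp ho'
        have hmz := w_mod p.1 p.2
        by_cases hc : w p.1 p.2 + 1 ≤ n' + m'
        · obtain ⟨q, hq, hqe, hqs, hqw⟩ := exL_odd n' m' ho'
          exact PC_lf_of_left q hq (IH _ _ _ _ (by omega)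
            (Or.inr (Or.inl ⟨hpe, hqe, by omega⟩)))
        · obtain ⟨q, hq, hqo, hqs⟩ := exR_even p.1 p.2 hpe (by omega)
          exact PC_lf_of_right q hq (IH _ _ _ _ (by omega)
            (Or.inr (Or.inr ⟨hqo, ho', by omega⟩)))
    · -- right options of PC n' m'
      intro p hp
      obtain ⟨hpo, hps⟩ := RP_facts p hp
      have hpo1 := Nat.odd_iff.mp hpo
      have hwn := w_le n m
      have hmn := w_mod n m
      rcases hcond with ⟨he, ho'⟩ | ⟨he, he', hw⟩ | ⟨ho, ho', hs⟩
      · -- S1(b)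
        have he1 := Nat.even_iff.mp he
        by_cases hc : p.1 + p.2 < n + m
        · obtain ⟨q, hq, hqo, hqs⟩ := exR_even n m he (by omega)
          exact PC_lf_of_right q hq (IH _ _ _ _ (by omega)
            (Or.inr (Or.inr ⟨hqo, hpo, by omega⟩)))
        · obtain ⟨q, hq, hqe, hqs, hqw⟩ := exL_odd p.1 p.2 hpo
          exact PC_lf_of_left q hq (IH _ _ _ _ (by omega)
            (Or.inr (Or.inl ⟨he, hqe, by omega⟩)))
      · -- S2(b)
        have he1 := Nat.even_iff.mp he
        by_cases hc : w n m < p.1 + p.2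
        · obtain ⟨q, hq, hqe, hqs, hqw⟩ := exL_odd p.1 p.2 hpo
          exact PC_lf_of_left q hq (IH _ _ _ _ (by omega)
            (Or.inr (Or.inl ⟨he, hqe, by omega⟩)))
        · obtain ⟨q, hq, hqo, hqs⟩ := exR_even n m he (by omega)
          exact PC_lf_of_right q hq (IH _ _ _ _ (by omega)
            (Or.inr (Or.inr ⟨hqo, hpo, by omega⟩)))
      · -- S3(b)
        have ho1 := Nat.odd_iff.mp ho
        have ho2 := Nat.odd_iff.mp ho'
        obtain ⟨q, hq, hqo, hqs⟩ := exR_odd n m ho (by omega)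
        exact PC_lf_of_right q hq (IH _ _ _ _ (by omega)
          (Or.inr (Or.inr ⟨hqo, hpo, by omega⟩)))

theorem stmt_5 (n n' m : ℕ) (hn : Odd (n + m)) (hn' : Even (n' + m)) :
    PC n' m ≤ PC n m := by
  exact key (n' + m + (n + m) + 1) n' m n m (by omega) (Or.inl ⟨hn', hn⟩)
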